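/- (Trokhimchuk's one-dimensional theorem, as used in Lemma 1) Let g : (α, β) → ℂ be continuous, and suppose that at every point t ∈ (α, β), except at most countably many, at least one of the one-sided derivatives lim_{δ→0⁺}(g(t±δ) − g(t))/δ exists and equals 0. Then g is constant on (α, β). -/

import Mathlib

noncomputable section

/-- The commutative algebra `A₃ = ℂ[ρ]/(ρ³)`, with basis `{1, ρ, ρ²}`;
an element `⟨a, b, c⟩` represents `a + b·ρ + c·ρ²`. -/
@[ext] structure A3 : Type where
  a : ℂ
  b : ℂ
  c : ℂ

namespace A3

instance : Zero A3 := ⟨⟨0, 0, 0⟩⟩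
instance : One A3 := ⟨⟨1, 0, 0⟩⟩
instance : Add A3 := ⟨fun x y => ⟨x.a + y.a, x.b + y.b, x.c + y.c⟩⟩
instance : Neg A3 := ⟨fun x => ⟨-x.a, -x.b, -x.c⟩⟩
instance : Mul A3 :=
  ⟨fun x y => ⟨x.a * y.a, x.a * y.b + x.b * y.a, x.a * y.c + x.b * y.b + x.c * y.a⟩⟩

@[simp] lemma zero_a : (0 : A3).a = 0 := rfl
@[simp] lemma zero_b : (0 : A3).b = 0 := rfl
@[simp] lemma zero_c : (0 : A3).c = 0 := rfl
@[simp] lemma one_a : (1 : A3).a = 1 := rfl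
@[simp] lemma one_b : (1 : A3).b = 0 := rfl
@[simp] lemma one_c : (1 : A3).c = 0 := rfl
@[simp] lemma add_a (x y : A3) : (x + y).a = x.a + y.a := rfl
@[simp] lemma add_b (x y : A3) : (x + y).b = x.b + y.b := rfl
@[simp] lemma add_c (x y : A3) : (x + y).c = x.c + y.c := rfl
@[simp] lemma neg_a (x : A3) : (-x).a = -x.a := rfl
@[simp] lemma neg_b (x : A3) : (-x).b = -x.b := rfl
@[simp] lemma neg_c (x : A3) : (-x).c = -x.c := rfl
@[simp] lemma mul_a (x y : A3) : (x * y).a = x.a * y.a := rfl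
@[simp] lemma mul_b (x y : A3) : (x * y).b = x.a * y.b + x.b * y.a := rfl
@[simp] lemma mul_c (x y : A3) : (x * y).c = x.a * y.c + x.b * y.b + x.c * y.a := rfl

instance : CommRing A3 where
  add_assoc x y z := by ext <;> simp <;> ring
  zero_add x := by ext <;> simp
  add_zero x := by ext <;> simp
  add_comm x y := by ext <;> simp <;> ring
  neg_add_cancel x := by ext <;> simp
  left_distrib x y z := by ext <;> simp <;> ring
  right_distrib x y z := by ext <;> simp <;> ring
  zero_mul x := by ext <;> simp
  mul_zero x := by ext <;> simp
  mul_assoc x y z := by ext <;> simp <;> ring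
  one_mul x := by ext <;> simp
  mul_one x := by ext <;> simp
  mul_comm x y := by ext <;> simp <;> ring
  nsmul := fun n x => ⟨n • x.a, n • x.b, n • x.c⟩
  nsmul_zero x := by ext <;> exact zero_nsmul _
  nsmul_succ n x := by ext <;> exact succ_nsmul _ _
  zsmul := fun n x => ⟨n • x.a, n • x.b, n • x.c⟩
  zsmul_zero' x := by ext <;> exact zero_zsmul _
  zsmul_succ' n x := by ext <;> exact SubNegMonoid.zsmul_succ' n _
  zsmul_neg' n x := by ext <;> exact SubNegMonoid.zsmul_neg' n _

/-- The canonical embedding `ℂ → A₃`. -/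
def toA3 : ℂ →+* A3 where
  toFun r := ⟨r, 0, 0⟩
  map_one' := rfl
  map_mul' x y := by ext <;> simp
  map_zero' := rfl
  map_add' x y := by ext <;> simp

instance : Algebra ℂ A3 := toA3.toAlgebra
instance : Algebra ℝ A3 := (toA3.comp (algebraMap ℝ ℂ)).toAlgebra

@[simp] lemma smulC_a (r : ℂ) (x : A3) : (r • x).a = r * x.a := by
  show (toA3 r * x).a = _ ; simp [toA3]
@[simp] lemma smulC_b (r : ℂ) (x : A3) : (r • x).b = r * x.b := by
  show (toA3 r * x).b = _ ; simp [toA3]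
@[simp] lemma smulC_c (r : ℂ) (x : A3) : (r • x).c = r * x.c := by
  show (toA3 r * x).c = _ ; simp [toA3]
@[simp] lemma smulR_a (r : ℝ) (x : A3) : (r • x).a = (r : ℂ) * x.a := by
  show ((toA3.comp (algebraMap ℝ ℂ)) r * x).a = _ ; simp [toA3]
@[simp] lemma smulR_b (r : ℝ) (x : A3) : (r • x).b = (r : ℂ) * x.b := by
  show ((toA3.comp (algebraMap ℝ ℂ)) r * x).b = _ ; simp [toA3]
@[simp] lemma smulR_c (r : ℝ) (x : A3) : (r • x).c = (r : ℂ) * x.c := by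
  show ((toA3.comp (algebraMap ℝ ℂ)) r * x).c = _ ; simp [toA3]

/-- The nilpotent generator `ρ`. -/
def ρ : A3 := ⟨0, 1, 0⟩

lemma rho_sq : ρ ^ 2 = ⟨0, 0, 1⟩ := by ext <;> simp [ρ, sq]
lemma rho_cubed : ρ ^ 3 = 0 := by ext <;> simp [ρ, pow_succ, sq]

/-- The element `a + b·ρ + c·ρ²` of `A₃`. -/
def el (a b c : ℂ) : A3 := algebraMap ℂ A3 a + b • ρ + c • ρ ^ 2

lemma el_def (a b c : ℂ) : el a b c = ⟨a, b, c⟩ := by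
  simp only [el, rho_sq]; ext <;> simp [ρ] <;> simp [Algebra.algebraMap_eq_smul_one, toA3]

/-- The Euclidean norm `‖a + bρ + cρ²‖ = √(|a|² + |b|² + |c|²)`. -/
def nrm (x : A3) : ℝ :=
  Real.sqrt (‖x.a‖ ^ 2 + ‖x.b‖ ^ 2 + ‖x.c‖ ^ 2)

/-- The topology of `A₃` (that of the Euclidean norm, i.e. of `ℂ³`). -/
instance : TopologicalSpace A3 :=
  TopologicalSpace.induced (fun x => (x.a, x.b, x.c)) inferInstance

/-- The functional `f(a + bρ + cρ²) = a`. -/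
def fl (x : A3) : ℂ := x.a

/-- The set `I = {λ₁ρ + λ₂ρ² : λ₁, λ₂ ∈ ℂ}`. -/
def Iset : Set A3 := {x | ∃ l₁ l₂ : ℂ, x = l₁ • ρ + l₂ • ρ ^ 2}

/-- The kernel of `f`, i.e. the ideal `I`, as a real subspace of `A₃`. -/
def Iker : Submodule ℝ A3 where
  carrier := {x | x.a = 0}
  add_mem' := by intro x y hx hy; simp_all [Set.mem_setOf_eq]
  zero_mem' := rfl
  smul_mem' := by intro r x hx; simp_all [Set.mem_setOf_eq]

/-- Componentwise contour integral over the circle `C(center, r)` of an `A₃`-valued function. -/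
def cInt (g : ℂ → A3) (center : ℂ) (r : ℝ) : A3 :=
  ⟨∮ z in C(center, r), (g z).a, ∮ z in C(center, r), (g z).b, ∮ z in C(center, r), (g z).c⟩

end A3

open Set MeasureTheory

lemma img_small {u : ℝ → ℝ} {P : Set ℝ} {c : ℝ}
    (h : ∀ x ∈ P, ∀ y ∈ P, |u y - u x| ≤ c) :
    volume (u '' P) ≤ ENNReal.ofReal (2 * c) := by
  rcases P.eq_empty_or_nonempty with rfl | ⟨x₀, hx₀⟩
  · simp
  · have hsub : u '' P ⊆ Icc (u x₀ - c) (u x₀ + c) := by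
      rintro _ ⟨x, hx, rfl⟩
      have := h x₀ hx₀ x hx
      have h1 := abs_le.mp this
      constructor <;> [linarith [h1.2]; linarith [h1.1]]
    calc volume (u '' P) ≤ volume (Icc (u x₀ - c) (u x₀ + c)) := measure_mono hsub
      _ = ENNReal.ofReal (2 * c) := by rw [Real.volume_Icc]; ring_nf

lemma grid_bound {u : ℝ → ℝ} {s t h ε : ℝ} (hst : s ≤ t) (hh : 0 < h) (hε : 0 ≤ ε)
    {P : Set ℝ} (hP : P ⊆ Icc s t)
    (hlip : ∀ x ∈ P, ∀ y ∈ P, |y - x| ≤ h → |u y - u x| ≤ ε * h) :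
    volume (u '' P) ≤ (⌊(t - s)/h⌋₊ + 1 : ℕ) * ENNReal.ofReal (2 * (ε * h)) := by
  set K : ℕ := ⌊(t - s)/h⌋₊ + 1 with hK
  have cover : P ⊆ ⋃ k ∈ Finset.range K, Icc (s + k*h) (s + k*h + h) := by
    intro x hx
    obtain ⟨hxs, hxt⟩ := hP hx
    have hnn : 0 ≤ (x - s)/h := div_nonneg (by linarith) hh.le
    refine Set.mem_iUnion₂.mpr ⟨⌊(x - s)/h⌋₊, Finset.mem_range.mpr
      (Nat.lt_succ_of_le (Nat.floor_le_floor (by gcongr <;> linarith))), ?_⟩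
    · have h1 : (⌊(x - s)/h⌋₊ : ℝ) ≤ (x - s)/h := Nat.floor_le hnn
      have h2 : (x - s)/h < ⌊(x - s)/h⌋₊ + 1 := Nat.lt_floor_add_one _
      have h1' : (⌊(x - s)/h⌋₊ : ℝ) * h ≤ x - s := by
        calc (⌊(x - s)/h⌋₊ : ℝ) * h ≤ ((x - s)/h) * h := by gcongr
          _ = x - s := div_mul_cancel₀ _ hh.ne'
      have h2' : x - s < ((⌊(x - s)/h⌋₊ : ℝ) + 1) * h := by
        calc x - s = ((x - s)/h) * h := (div_mul_cancel₀ _ hh.ne').symm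
          _ < ((⌊(x - s)/h⌋₊ : ℝ) + 1) * h := by gcongr
      constructor <;> nlinarith
  have himg : u '' P ⊆ ⋃ k ∈ Finset.range K, u '' (P ∩ Icc (s + k*h) (s + k*h + h)) := by
    rintro _ ⟨x, hx, rfl⟩
    obtain ⟨I, hI, hxI⟩ := Set.mem_iUnion₂.mp (cover hx)
    exact Set.mem_iUnion₂.mpr ⟨I, hI, ⟨x, ⟨hx, hxI⟩, rfl⟩⟩
  calc volume (u '' P) ≤ ∑ k ∈ Finset.range K, volume (u '' (P ∩ Icc (s + k*h) (s + k*h + h))) :=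
        (measure_mono himg).trans (measure_biUnion_finset_le _ _)
    _ ≤ ∑ k ∈ Finset.range K, ENNReal.ofReal (2 * (ε * h)) := by
        refine Finset.sum_le_sum fun k _ => img_small ?_
        rintro x ⟨hxP, hx1, hx2⟩ y ⟨hyP, hy1, hy2⟩
        exact hlip x hxP y hyP (abs_le.mpr ⟨by linarith, by linarith⟩)
    _ = (K : ℕ) * ENNReal.ofReal (2 * (ε * h)) := by
        rw [Finset.sum_const, Finset.card_range, nsmul_eq_mul]

lemma key_measure_zero {u : ℝ → ℝ} {s t : ℝ} (hst : s ≤ t) {E : Set ℝ} (hE : E ⊆ Icc s t)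
    (h : ∀ x ∈ E, ∀ ε : ℝ, 0 < ε →
      (∃ r > 0, ∀ δ : ℝ, 0 < δ → δ ≤ r → |u (x + δ) - u x| ≤ ε * δ) ∨
      (∃ r > 0, ∀ δ : ℝ, 0 < δ → δ ≤ r → |u (x - δ) - u x| ≤ ε * δ)) :
    volume (u '' E) = 0 := by
  refine le_antisymm ?_ zero_le
  refine ENNReal.le_of_forall_pos_le_add fun ε' hε' _ => ?_
  rw [zero_add, ← ENNReal.ofReal_coe_nnreal]
  have hT : (0:ℝ) < t - s + 1 := by linarith
  set ε : ℝ := (ε' : ℝ) / (4 * (t - s + 1)) with hεdef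
  have hε'pos : (0:ℝ) < ε' := hε'
  have hεpos : 0 < ε := by positivity
  set P : ℕ → Set ℝ := fun n =>
    {x ∈ E | ∀ δ : ℝ, 0 < δ → δ ≤ 1/(n+1) → |u (x + δ) - u x| ≤ ε * δ} with hPdef
  set Q : ℕ → Set ℝ := fun n =>
    {x ∈ E | ∀ δ : ℝ, 0 < δ → δ ≤ 1/(n+1) → |u (x - δ) - u x| ≤ ε * δ} with hQdef
  have hres : ∀ n m : ℕ, n ≤ m → (1:ℝ)/(m+1) ≤ 1/(n+1) := by
    intro n m hnm
    apply one_div_le_one_div_of_le (by positivity)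
    have : (n:ℝ) ≤ m := Nat.cast_le.mpr hnm
    linarith
  have hcover : E ⊆ ⋃ n, (P n ∪ Q n) := by
    intro x hx
    rcases h x hx ε hεpos with ⟨r, hr, hcond⟩ | ⟨r, hr, hcond⟩ <;>
      obtain ⟨n, hn⟩ := exists_nat_one_div_lt hr
    · exact Set.mem_iUnion.mpr ⟨n, Or.inl ⟨hx, fun δ h1 h2 => hcond δ h1 (h2.trans hn.le)⟩⟩
    · exact Set.mem_iUnion.mpr ⟨n, Or.inr ⟨hx, fun δ h1 h2 => hcond δ h1 (h2.trans hn.le)⟩⟩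
  have hmono : Monotone fun n => u '' (P n ∪ Q n) := by
    intro n m hnm
    apply Set.image_mono
    rintro x (⟨hx, hc⟩ | ⟨hx, hc⟩)
    · exact Or.inl ⟨hx, fun δ h1 h2 => hc δ h1 (h2.trans (hres n m hnm))⟩
    · exact Or.inr ⟨hx, fun δ h1 h2 => hc δ h1 (h2.trans (hres n m hnm))⟩
  -- per-n bound
  have hbound : ∀ n : ℕ, volume (u '' (P n ∪ Q n)) ≤ ENNReal.ofReal (ε' : ℝ) := by
    intro n
    set hn : ℝ := 1/(n+1) with hhn
    have hhpos : 0 < hn := by positivity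
    have hh1 : hn ≤ 1 := by
      rw [hhn, div_le_one (by positivity)]
      have : (0:ℝ) ≤ n := Nat.cast_nonneg n
      linarith
    have hKh : ((⌊(t - s)/hn⌋₊ + 1 : ℕ) : ℝ) * hn ≤ t - s + 1 := by
      have h1 : (⌊(t - s)/hn⌋₊ : ℝ) ≤ (t - s)/hn := Nat.floor_le (div_nonneg (by linarith) hhpos.le)
      have : ((⌊(t - s)/hn⌋₊ + 1 : ℕ) : ℝ) ≤ (t - s)/hn + 1 := by push_cast; linarith
      calc ((⌊(t - s)/hn⌋₊ + 1 : ℕ) : ℝ) * hn ≤ ((t - s)/hn + 1) * hn := by gcongr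
        _ = (t - s) + hn := by field_simp
        _ ≤ t - s + 1 := by linarith
    have hhalf : ∀ R : Set ℝ, R ⊆ Icc s t →
        (∀ x ∈ R, ∀ y ∈ R, |y - x| ≤ hn → |u y - u x| ≤ ε * hn) →
        volume (u '' R) ≤ ENNReal.ofReal (2 * ε * (t - s + 1)) := by
      intro R hRsub hRlip
      calc volume (u '' R) ≤ (⌊(t - s)/hn⌋₊ + 1 : ℕ) * ENNReal.ofReal (2 * (ε * hn)) :=
            grid_bound hst hhpos hεpos.le hRsub hRlip
        _ = ENNReal.ofReal (((⌊(t - s)/hn⌋₊ + 1 : ℕ) : ℝ) * (2 * (ε * hn))) := by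
            rw [← ENNReal.ofReal_natCast (⌊(t - s)/hn⌋₊ + 1),
              ← ENNReal.ofReal_mul (Nat.cast_nonneg _)]
        _ ≤ ENNReal.ofReal (2 * ε * (t - s + 1)) := by
            apply ENNReal.ofReal_le_ofReal; nlinarith
    have hPlip : ∀ x ∈ P n, ∀ y ∈ P n, |y - x| ≤ hn → |u y - u x| ≤ ε * hn := by
      intro x hx y hy hd
      rcases lt_trichotomy x y with hlt | rfl | hlt
      · have := hx.2 (y - x) (by linarith) (by rw [abs_of_pos (by linarith)] at hd; linarith)
        rw [show x + (y - x) = y by ring] at this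
        calc |u y - u x| ≤ ε * (y - x) := this
          _ ≤ ε * hn := by nlinarith [abs_le.mp hd]
      · simp; positivity
      · have := hy.2 (x - y) (by linarith) (by rw [abs_of_neg (by linarith)] at hd; linarith)
        rw [show y + (x - y) = x by ring, abs_sub_comm] at this
        calc |u y - u x| ≤ ε * (x - y) := this
          _ ≤ ε * hn := by nlinarith [abs_le.mp hd]
    have hQlip : ∀ x ∈ Q n, ∀ y ∈ Q n, |y - x| ≤ hn → |u y - u x| ≤ ε * hn := by
      intro x hx y hy hd
      rcases lt_trichotomy x y with hlt | rfl | hlt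
      · have := hy.2 (y - x) (by linarith) (by rw [abs_of_pos (by linarith)] at hd; linarith)
        rw [show y - (y - x) = x by ring, abs_sub_comm] at this
        calc |u y - u x| ≤ ε * (y - x) := this
          _ ≤ ε * hn := by nlinarith [abs_le.mp hd]
      · simp; positivity
      · have := hx.2 (x - y) (by linarith) (by rw [abs_of_neg (by linarith)] at hd; linarith)
        rw [show x - (x - y) = y by ring] at this
        calc |u y - u x| ≤ ε * (x - y) := this
          _ ≤ ε * hn := by nlinarith [abs_le.mp hd]
    calc volume (u '' (P n ∪ Q n)) ≤ volume (u '' P n) + volume (u '' Q n) := by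
          rw [Set.image_union]; exact measure_union_le _ _
      _ ≤ ENNReal.ofReal (2 * ε * (t - s + 1)) + ENNReal.ofReal (2 * ε * (t - s + 1)) := by
          gcongr
          · exact hhalf _ (fun x hx => hE hx.1) hPlip
          · exact hhalf _ (fun x hx => hE hx.1) hQlip
      _ = ENNReal.ofReal (4 * ε * (t - s + 1)) := by
          rw [← ENNReal.ofReal_add (by positivity) (by positivity)]; ring_nf
      _ = ENNReal.ofReal (ε' : ℝ) := by
          congr 1; rw [hεdef]; field_simp
  calc volume (u '' E) ≤ volume (⋃ n, u '' (P n ∪ Q n)) := by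
        apply measure_mono
        exact (Set.image_mono (f := u) hcover).trans (by rw [Set.image_iUnion])
    _ = ⨆ n, volume (u '' (P n ∪ Q n)) := hmono.measure_iUnion
    _ ≤ ENNReal.ofReal (ε' : ℝ) := iSup_le hbound

/-- Trokhimchuk's one-dimensional theorem: a continuous `g : (α,β) → ℂ`
having, off a countable set, a vanishing one-sided derivative at each point, is constant. -/
theorem stmt18 (α β : ℝ) (g : ℝ → ℂ) (hg : ContinuousOn g (Set.Ioo α β))
    (S : Set ℝ) (hS : S.Countable)
    (h : ∀ t ∈ Set.Ioo α β \ S,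
      Filter.Tendsto (fun δ : ℝ => δ⁻¹ • (g (t + δ) - g t))
        (nhdsWithin 0 (Set.Ioi 0)) (nhds 0) ∨
      Filter.Tendsto (fun δ : ℝ => δ⁻¹ • (g (t - δ) - g t))
        (nhdsWithin 0 (Set.Ioi 0)) (nhds 0)) :
    ∀ s ∈ Set.Ioo α β, ∀ t ∈ Set.Ioo α β, g s = g t := by
  suffices haux : ∀ s ∈ Set.Ioo α β, ∀ t ∈ Set.Ioo α β, s ≤ t → g s = g t by
    intro s hs t ht
    rcases le_total s t with hle | hle
    · exact haux s hs t ht hle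
    · exact (haux t ht s hs hle).symm
  intro s hs t ht hst
  have hsub : Set.Icc s t ⊆ Set.Ioo α β := fun x hx =>
    ⟨lt_of_lt_of_le hs.1 hx.1, lt_of_le_of_lt hx.2 ht.2⟩
  set E : Set ℝ := Set.Icc s t \ S with hE
  -- eventual norm bound from the tendsto hypothesis
  have hsmall : ∀ (f : ℝ → ℂ), Filter.Tendsto (fun δ : ℝ => δ⁻¹ • f δ)
      (nhdsWithin 0 (Set.Ioi 0)) (nhds 0) → ∀ ε : ℝ, 0 < ε →
      ∃ r > 0, ∀ δ : ℝ, 0 < δ → δ ≤ r → ‖f δ‖ ≤ ε * δ := by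
    intro f hf ε hε
    rw [Metric.tendsto_nhdsWithin_nhds] at hf
    obtain ⟨r, hr, hcl⟩ := hf ε hε
    refine ⟨r/2, by linarith, fun δ h1 h2 => ?_⟩
    have hd : dist (δ⁻¹ • f δ) 0 < ε := by
      apply hcl h1
      rw [Real.dist_eq, sub_zero, abs_of_pos h1]; linarith
    rw [dist_zero_right, norm_smul, Real.norm_eq_abs, abs_of_pos (inv_pos.mpr h1)] at hd
    have h3 : δ⁻¹ * ‖f δ‖ ≤ ε := hd.le
    calc ‖f δ‖ = δ * (δ⁻¹ * ‖f δ‖) := by field_simp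
      _ ≤ δ * ε := by nlinarith [norm_nonneg (f δ)]
      _ = ε * δ := mul_comm _ _
  -- the real-component constancy helper
  have main : ∀ u : ℝ → ℝ, ContinuousOn u (Set.Icc s t) →
      (∀ z y : ℝ, |u z - u y| ≤ ‖g z - g y‖) → u s = u t := by
    intro u hu hub
    have hkey : MeasureTheory.volume (u '' E) = 0 := by
      apply key_measure_zero hst (Set.diff_subset (t := S))
      intro x hx ε hε
      rcases h x ⟨hsub hx.1, hx.2⟩ with hT | hT
      · left
        obtain ⟨r, hr, hb⟩ := hsmall (fun δ => g (x + δ) - g x) hT ε hε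
        exact ⟨r, hr, fun δ h1 h2 => (hub (x + δ) x).trans (hb δ h1 h2)⟩
      · right
        obtain ⟨r, hr, hb⟩ := hsmall (fun δ => g (x - δ) - g x) hT ε hε
        exact ⟨r, hr, fun δ h1 h2 => (hub (x - δ) x).trans (hb δ h1 h2)⟩
    have himg : MeasureTheory.volume (u '' Set.Icc s t) = 0 := by
      have hsplit : u '' Set.Icc s t ⊆ u '' E ∪ u '' S := by
        rintro _ ⟨x, hx, rfl⟩
        by_cases hxS : x ∈ S
        · exact Or.inr (Set.mem_image_of_mem u hxS)
        · exact Or.inl (Set.mem_image_of_mem u ⟨hx, hxS⟩)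
      refine le_antisymm ?_ zero_le
      calc MeasureTheory.volume (u '' Set.Icc s t)
          ≤ MeasureTheory.volume (u '' E ∪ u '' S) := measure_mono hsplit
        _ ≤ MeasureTheory.volume (u '' E) + MeasureTheory.volume (u '' S) := measure_union_le _ _
        _ = 0 := by rw [hkey, (hS.image u).measure_zero]; simp
    have hIVT : Set.uIcc (u s) (u t) ⊆ u '' Set.Icc s t := by
      have := intermediate_value_uIcc (f := u) (a := s) (b := t)
        (by rwa [Set.uIcc_of_le hst])
      rwa [Set.uIcc_of_le hst] at this
    have h0 : MeasureTheory.volume (Set.uIcc (u s) (u t)) = 0 :=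
      le_antisymm (himg ▸ measure_mono hIVT) zero_le
    rw [Real.volume_interval, ENNReal.ofReal_eq_zero] at h0
    have := abs_nonneg (u t - u s)
    have : |u t - u s| = 0 := le_antisymm h0 this
    have := abs_eq_zero.mp this
    linarith
  have hre : (g s).re = (g t).re := by
    apply main (fun x => (g x).re)
    · exact Complex.continuous_re.comp_continuousOn (hg.mono hsub)
    · intro z y
      simpa [Complex.sub_re] using Complex.abs_re_le_norm (g z - g y)
  have him : (g s).im = (g t).im := by
    apply main (fun x => (g x).im)
    · exact Complex.continuous_im.comp_continuousOn (hg.mono hsub)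
    · intro z y
      simpa [Complex.sub_im] using Complex.abs_im_le_norm (g z - g y)
  exact Complex.ext hre him
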